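/- Let α ∈ (0,1) and x ∈ I_α = [min{α,1-α},1]. Then x is rational if and only if there exists an integer N ≥ 0 such that T_α^N(x) = 1. -/

import Mathlib

open Set MeasureTheory Filter Topology
open scoped Classical

/-- The Gauss map `G(x) = 1/x - ⌊1/x⌋`. -/
noncomputable def gauss (x : ℝ) : ℝ := Int.fract (1 / x)

/-- The flipped region `D_α = ⋃_{n ≥ 1} [1/(n+α), 1/n]`. -/
def Dset (α : ℝ) : Set ℝ := ⋃ n : ℕ, Set.Icc (1 / ((n : ℝ) + 1 + α)) (1 / ((n : ℝ) + 1))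

/-- The flipped α-continued fraction map `T_α`. -/
noncomputable def T (α x : ℝ) : ℝ := if x ∈ Dset α then 1 - gauss x else gauss x

lemma one_div_nat_mem_Dset {α : ℝ} (hα : 0 < α) (m : ℕ) (hm : 1 ≤ m) :
    (1 / (m:ℝ)) ∈ Dset α := by
  refine Set.mem_iUnion.2 ⟨m - 1, ?_⟩
  have hc : ((m - 1 : ℕ) : ℝ) + 1 = (m : ℝ) := by
    rw [Nat.cast_sub hm]; push_cast; ring
  rw [hc]
  constructor
  · apply one_div_le_one_div_of_le
    · exact_mod_cast Nat.pos_of_ne_zero (by omega)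
    · linarith
  · exact le_refl _

lemma gauss_ratCast (q : ℚ) : gauss (q:ℝ) = ((Int.fract q⁻¹ : ℚ) : ℝ) := by
  unfold gauss
  rw [one_div, ← Rat.cast_inv, Rat.cast_fract]

lemma iter_rat (α : ℝ) : ∀ N : ℕ, ∀ x : ℝ, (T α)^[N] x = 1 → ∃ q : ℚ, (q:ℝ) = x := by
  intro N
  induction N with
  | zero => intro x h; exact ⟨1, by simpa using h.symm⟩
  | succ N ih =>
    intro x h
    rw [Function.iterate_succ_apply] at h
    obtain ⟨q, hq⟩ := ih _ h
    obtain ⟨p, hp⟩ : ∃ p : ℚ, (p : ℝ) = gauss x := by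
      unfold T at hq
      split at hq
      · exact ⟨1 - q, by push_cast; linarith⟩
      · exact ⟨q, hq⟩
    refine ⟨((⌊(1:ℝ)/x⌋ : ℚ) + p)⁻¹, ?_⟩
    have h1 : (1:ℝ)/x = (((⌊(1:ℝ)/x⌋ : ℚ) + p : ℚ) : ℝ) := by
      have h2 : (p:ℝ) = 1/x - ⌊(1:ℝ)/x⌋ := hp.trans rfl
      push_cast
      linarith
    rw [Rat.cast_inv, ← h1, one_div, inv_inv]

lemma den_fract_inv_dvd (q : ℚ) : (Int.fract q⁻¹).den ∣ q.num.natAbs := by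
  have h1 : (Int.fract q⁻¹).den ∣ q⁻¹.den := by
    have he : Int.fract q⁻¹ = q⁻¹ + ((-⌊q⁻¹⌋ : ℤ) : ℚ) := by
      rw [Int.fract]; push_cast; ring
    rw [he]
    simpa using Rat.add_den_dvd q⁻¹ ((-⌊q⁻¹⌋ : ℤ) : ℚ)
  have h2 : ((q⁻¹.den : ℤ)) ∣ q.num := by
    rw [Rat.inv_def]
    exact Rat.den_dvd _ _
  refine h1.trans ?_
  exact Int.natCast_dvd_natCast.mp (Int.dvd_natAbs.mpr h2)

lemma reaches_one {α : ℝ} (hα0 : 0 < α) :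
    ∀ n : ℕ, ∀ q : ℚ, q.den ≤ n → 0 < q → q ≤ 1 → ∃ N : ℕ, (T α)^[N] (q:ℝ) = 1 := by
  intro n
  induction n with
  | zero => intro q hden _ _; exact absurd hden (by have := q.pos; omega)
  | succ n ih =>
    intro q hden hq0 hq1
    rcases eq_or_lt_of_le hq1 with h1 | h1
    · exact ⟨0, by simp [h1]⟩
    have hnum : 0 < q.num := Rat.num_pos.2 hq0
    have hnumden : q.num < q.den := by
      have hd : (0:ℚ) < (q.den : ℚ) := by exact_mod_cast q.pos
      have h2 : (q.num : ℚ) / (q.den : ℚ) < 1 := by rw [Rat.num_div_den]; exact h1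
      exact_mod_cast (div_lt_one hd).mp h2
    by_cases hn1 : q.num = 1
    · have hqe : (q:ℝ) = 1 / (q.den : ℝ) := by
        rw [Rat.cast_def, hn1]; push_cast; ring
      refine ⟨1, ?_⟩
      rw [Function.iterate_one]
      have hmem : (q:ℝ) ∈ Dset α := by
        rw [hqe]; exact one_div_nat_mem_Dset hα0 _ q.pos
      have hg : gauss (q:ℝ) = 0 := by
        rw [hqe]; unfold gauss; rw [one_div_one_div]
        exact Int.fract_natCast _
      rw [T, if_pos hmem, hg]; ring
    · set f := Int.fract q⁻¹ with hf
      have hf0 : 0 ≤ f := Int.fract_nonneg _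
      have hf1 : f < 1 := Int.fract_lt_one _
      have hfne : f ≠ 0 := by
        intro h0
        have hinv : (⌊q⁻¹⌋ : ℚ) = q⁻¹ := by
          have := Int.floor_add_fract q⁻¹
          rw [← hf, h0, add_zero] at this
          exact this
        have hq' : q = ((⌊q⁻¹⌋:ℚ))⁻¹ := by rw [hinv, inv_inv]
        have hqinv1 : (1:ℚ) ≤ q⁻¹ := one_le_inv_iff₀.2 ⟨hq0, hq1⟩
        have hfl : 0 < ⌊q⁻¹⌋ := by
          have : (1:ℤ) ≤ ⌊q⁻¹⌋ := Int.le_floor.2 (by exact_mod_cast hqinv1)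
          omega
        have hnum1 := Rat.inv_intCast_num_of_pos hfl
        rw [← hq'] at hnum1
        exact hn1 hnum1
      have hfden : f.den ∣ q.num.natAbs := den_fract_inv_dvd q
      set r : ℚ := if (q:ℝ) ∈ Dset α then 1 - f else f with hr
      have hTr : T α (q:ℝ) = (r:ℝ) := by
        rw [hr]; unfold T
        by_cases hm : (q:ℝ) ∈ Dset α
        · rw [if_pos hm, if_pos hm, gauss_ratCast, hf, Rat.cast_sub, Rat.cast_one]
        · rw [if_neg hm, if_neg hm, gauss_ratCast]
      have hr0 : 0 < r := by
        rw [hr]; split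
        · linarith
        · exact lt_of_le_of_ne hf0 (Ne.symm hfne)
      have hr1 : r ≤ 1 := by
        rw [hr]; split
        · linarith
        · linarith
      have hrden : r.den ≤ n := by
        have h3 : r.den ∣ f.den := by
          rw [hr]; split
          · have he : (1 : ℚ) - f = ((1:ℤ):ℚ) + (-f) := by push_cast; ring
            rw [he]
            simpa [Rat.den_neg_eq_den] using Rat.add_den_dvd ((1:ℤ):ℚ) (-f)
          · exact dvd_rfl
        have h4 : r.den ≤ q.num.natAbs := Nat.le_of_dvd (by omega) (h3.trans hfden)
        omega
      obtain ⟨N, hN⟩ := ih r hrden hr0 hr1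
      exact ⟨N + 1, by rw [Function.iterate_succ_apply, hTr, hN]⟩


/-- `x ∈ I_α` is rational iff its `T_α`-orbit reaches `1`. -/
theorem stmt_2 (α : ℝ) (hα : α ∈ Set.Ioo (0:ℝ) 1) (x : ℝ)
    (hx : x ∈ Set.Icc (min α (1 - α)) 1) :
    (∃ q : ℚ, (q : ℝ) = x) ↔ ∃ N : ℕ, (T α)^[N] x = 1 := by
  obtain ⟨hα0, hα1⟩ := hα
  constructor
  · rintro ⟨q, rfl⟩
    have hm : (0:ℝ) < min α (1 - α) := lt_min hα0 (by linarith)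
    have hq0 : 0 < q := by exact_mod_cast lt_of_lt_of_le hm hx.1
    have hq1 : q ≤ 1 := by exact_mod_cast hx.2
    exact reaches_one hα0 q.den q le_rfl hq0 hq1
  · rintro ⟨N, hN⟩
    exact iter_rat α N x hN
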